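/- Let A be an associative unital ring and let (F, C) be an Ext^1-orthogonal pair of classes of left A-modules, both closed under extensions in the category of left A-modules. Assume that every left A-module is a quotient module of a module from F and a submodule of a module from C. Then a special precover sequence 0 → C' → F → M → 0 (with F ∈ F, C' ∈ C) exists for every left A-module M if and only if a special preenvelope sequence 0 → M → C → F' → 0 (with C ∈ C, F' ∈ F) exists for every left A-module M. -/

import Mathlib

/-! Common definitions for the formalization of statements from
"An explicit self-dual construction of complete cotorsion pairs in the relative context". -/

open CategoryTheory

universe u

noncomputable section

noncomputable instance moduleCatHasExt (A : Type u) [Ring A] :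
    HasExt.{u+1} (ModuleCat.{u} A) :=
  letI := HasDerivedCategory.standard (ModuleCat.{u} A)
  hasExt_of_hasDerivedCategory _

namespace CotorsionPaper

section OneRing

variable {A : Type u} [Ring A]

/-- `Ext^n_A(X, Y) = 0`. -/
def extVanish (X Y : ModuleCat.{u} A) (n : ℕ) : Prop :=
  Subsingleton (Abelian.Ext X Y n)

/-- Two classes of left `A`-modules are `Ext^1`-orthogonal. -/
def Ext1Orthogonal (F C : Set (ModuleCat.{u} A)) : Prop :=
  ∀ X ∈ F, ∀ Y ∈ C, extVanish X Y 1

/-- `F^{⊥₁}`. -/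
def rightPerp (F : Set (ModuleCat.{u} A)) : Set (ModuleCat.{u} A) :=
  {Y | ∀ X ∈ F, extVanish X Y 1}

/-- `^{⊥₁}C`. -/
def leftPerp (C : Set (ModuleCat.{u} A)) : Set (ModuleCat.{u} A) :=
  {X | ∀ Y ∈ C, extVanish X Y 1}

/-- `(F, C)` is a cotorsion pair. -/
def IsCotorsionPair (F C : Set (ModuleCat.{u} A)) : Prop :=
  C = rightPerp F ∧ F = leftPerp C

/-- `M` admits a special precover sequence `0 → C' → F → M → 0` with `F ∈ F`, `C' ∈ C`. -/
def HasSpecialPrecover (F C : Set (ModuleCat.{u} A)) (M : ModuleCat.{u} A) : Prop :=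
  ∃ (C' Fm : ModuleCat.{u} A) (i : C' ⟶ Fm) (p : Fm ⟶ M) (w : i ≫ p = 0),
    (ShortComplex.mk i p w).ShortExact ∧ Fm ∈ F ∧ C' ∈ C

/-- `M` admits a special preenvelope sequence `0 → M → C → F' → 0` with `C ∈ C`, `F' ∈ F`. -/
def HasSpecialPreenvelope (F C : Set (ModuleCat.{u} A)) (M : ModuleCat.{u} A) : Prop :=
  ∃ (Cm F' : ModuleCat.{u} A) (i : M ⟶ Cm) (p : Cm ⟶ F') (w : i ≫ p = 0),
    (ShortComplex.mk i p w).ShortExact ∧ Cm ∈ C ∧ F' ∈ F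

/-- The pair `(F, C)` admits approximation sequences. -/
def HasApproximations (F C : Set (ModuleCat.{u} A)) : Prop :=
  (∀ M : ModuleCat.{u} A, HasSpecialPrecover F C M) ∧
  (∀ M : ModuleCat.{u} A, HasSpecialPreenvelope F C M)

/-- `(F, C)` is a complete cotorsion pair. -/
def IsCompleteCotorsionPair (F C : Set (ModuleCat.{u} A)) : Prop :=
  IsCotorsionPair F C ∧ HasApproximations F C

/-- Hereditariness: `Ext^n(F, C) = 0` for all `F ∈ F`, `C ∈ C` and `n ≥ 1`. -/
def IsHereditary (F C : Set (ModuleCat.{u} A)) : Prop :=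
  ∀ X ∈ F, ∀ Y ∈ C, ∀ n : ℕ, 1 ≤ n → extVanish X Y n

/-- `X^⊕`: the class of all direct summands of modules from `X`. -/
def summands (X : Set (ModuleCat.{u} A)) : Set (ModuleCat.{u} A) :=
  {M | ∃ Y ∈ X, ∃ (i : M ⟶ Y) (r : Y ⟶ M), i ≫ r = 𝟙 M}

def ClosedUnderExtensions (F : Set (ModuleCat.{u} A)) : Prop :=
  ∀ (S : ShortComplex (ModuleCat.{u} A)), S.ShortExact → S.X₁ ∈ F → S.X₃ ∈ F → S.X₂ ∈ F

def ClosedUnderEpiKernels (F : Set (ModuleCat.{u} A)) : Prop :=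
  ∀ (S : ShortComplex (ModuleCat.{u} A)), S.ShortExact → S.X₂ ∈ F → S.X₃ ∈ F → S.X₁ ∈ F

def ClosedUnderMonoCokernels (C : Set (ModuleCat.{u} A)) : Prop :=
  ∀ (S : ShortComplex (ModuleCat.{u} A)), S.ShortExact → S.X₁ ∈ C → S.X₂ ∈ C → S.X₃ ∈ C

def EveryModuleIsQuotient (F : Set (ModuleCat.{u} A)) : Prop :=
  ∀ M : ModuleCat.{u} A, ∃ X ∈ F, ∃ p : X ⟶ M, Epi p

def EveryModuleIsSubmodule (C : Set (ModuleCat.{u} A)) : Prop :=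
  ∀ M : ModuleCat.{u} A, ∃ X ∈ C, ∃ i : M ⟶ X, Mono i

/-- `F` is a resolving class. -/
def IsResolving (F : Set (ModuleCat.{u} A)) : Prop :=
  ClosedUnderExtensions F ∧ ClosedUnderEpiKernels F ∧ EveryModuleIsQuotient F

/-- `C` is a coresolving class. -/
def IsCoresolving (C : Set (ModuleCat.{u} A)) : Prop :=
  ClosedUnderExtensions C ∧ ClosedUnderMonoCokernels C ∧ EveryModuleIsSubmodule C

/-- `M` has `F`-resolution dimension at most `k`: there is an exact sequence
`0 → F_k → ⋯ → F_0 → M → 0` with all `F_i ∈ F` (encoded as an everywhere exact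
`ℕ`-indexed resolution vanishing in degrees `> k`). -/
def ResolutionDimLE (F : Set (ModuleCat.{u} A)) (M : ModuleCat.{u} A) (k : ℕ) : Prop :=
  ∃ (G : ℕ → ModuleCat.{u} A) (d : ∀ m, G (m+1) ⟶ G m) (ε : G 0 ⟶ M)
    (hd : ∀ m, d (m+1) ≫ d m = 0) (hε : d 0 ≫ ε = 0),
    (∀ i, i ≤ k → G i ∈ F) ∧ (∀ i, k < i → Limits.IsZero (G i)) ∧ Epi ε ∧
    (ShortComplex.mk (d 0) ε hε).Exact ∧
    (∀ m, (ShortComplex.mk (d (m+1)) (d m) (hd m)).Exact)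

/-- `M` has `C`-coresolution dimension at most `k`: there is an exact sequence
`0 → M → C^0 → ⋯ → C^k → 0` with all `C^i ∈ C`. -/
def CoresolutionDimLE (C : Set (ModuleCat.{u} A)) (M : ModuleCat.{u} A) (k : ℕ) : Prop :=
  ∃ (G : ℕ → ModuleCat.{u} A) (d : ∀ m, G m ⟶ G (m+1)) (η : M ⟶ G 0)
    (hd : ∀ m, d m ≫ d (m+1) = 0) (hη : η ≫ d 0 = 0),
    (∀ i, i ≤ k → G i ∈ C) ∧ (∀ i, k < i → Limits.IsZero (G i)) ∧ Mono η ∧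
    (ShortComplex.mk η (d 0) hη).Exact ∧
    (∀ m, (ShortComplex.mk (d m) (d (m+1)) (hd m)).Exact)

/-- `N` is `α`-cofiltered by the class `T`: there is an `α`-indexed cofiltration of `N`
(a compatible inverse system with `G 0 = 0`, `G α = N`, surjective successor transition
maps, which is continuous -- i.e. maps isomorphically onto the inverse limit -- at limit
ordinals) whose successive kernels are isomorphic to modules from `T`. -/
def IsCofilteredBy (T : Set (ModuleCat.{u} A)) (α : Ordinal.{u}) (N : ModuleCat.{u} A) : Prop :=
  ∃ (G : ∀ i : Ordinal.{u}, i ≤ α → ModuleCat.{u} A)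
    (π : ∀ (i j : Ordinal.{u}) (hj : j ≤ i) (hi : i ≤ α), G i hi ⟶ G j (hj.trans hi)),
    (∀ i (hi : i ≤ α), π i i le_rfl hi = 𝟙 (G i hi)) ∧
    (∀ i j k (hk : k ≤ j) (hj : j ≤ i) (hi : i ≤ α),
      π i j hj hi ≫ π j k hk (hj.trans hi) = π i k (hk.trans hj) hi) ∧
    Limits.IsZero (G 0 (by simp)) ∧
    G α le_rfl = N ∧
    (∀ i (hi : i + 1 ≤ α), Epi (π (i+1) i (by simp) hi)) ∧
    (∀ i (hi : i ≤ α), Order.IsSuccLimit i →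
      (∀ x y : G i hi,
        (∀ j (hj : j < i), π i j hj.le hi x = π i j hj.le hi y) → x = y) ∧
      (∀ c : ∀ (j : Ordinal.{u}) (hj : j < i), G j (hj.le.trans hi),
        (∀ j k (hk : k < j) (hj : j < i),
          π j k hk.le (hj.le.trans hi) (c j hj) = c k (hk.trans hj)) →
        ∃ x : G i hi, ∀ j (hj : j < i), π i j hj.le hi x = c j hj)) ∧
    (∀ i (hi : i + 1 ≤ α), ∃ X ∈ T,
      Nonempty ((LinearMap.ker (π (i+1) i (by simp) hi).hom) ≃ₗ[A] X))

/-- `Cof_α(T)`. -/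
def Cof (T : Set (ModuleCat.{u} A)) (α : Ordinal.{u}) : Set (ModuleCat.{u} A) :=
  {N | IsCofilteredBy T α N}

/-- `Cof(T)`: the union of `Cof_α(T)` over all ordinals `α`. -/
def CofAll (T : Set (ModuleCat.{u} A)) : Set (ModuleCat.{u} A) :=
  {N | ∃ α : Ordinal.{u}, IsCofilteredBy T α N}

/-- `M` is `α`-filtered by the class `S`: there is an increasing, continuous chain of
submodules starting at `0` and ending at `M` whose successive quotients are isomorphic
to modules from `S`. -/
def IsFilteredBy (S : Set (ModuleCat.{u} A)) (α : Ordinal.{u}) (M : ModuleCat.{u} A) : Prop :=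
  ∃ Fl : ∀ i : Ordinal.{u}, i ≤ α → Submodule A M,
    (∀ i j (hj : j ≤ i) (hi : i ≤ α), Fl j (hj.trans hi) ≤ Fl i hi) ∧
    Fl 0 (by simp) = ⊥ ∧
    Fl α le_rfl = ⊤ ∧
    (∀ i (hi : i ≤ α), Order.IsSuccLimit i →
      Fl i hi = ⨆ (j : Ordinal.{u}) (hj : j < i), Fl j (hj.le.trans hi)) ∧
    (∀ i (hi : i + 1 ≤ α), ∃ X ∈ S,
      Nonempty ((↥(Fl (i+1) hi) ⧸ (Submodule.comap (Fl (i+1) hi).subtype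
        (Fl i ((by simp : i ≤ i + 1).trans hi)))) ≃ₗ[A] X))

/-- `Fil_α(S)`. -/
def Fil (S : Set (ModuleCat.{u} A)) (α : Ordinal.{u}) : Set (ModuleCat.{u} A) :=
  {M | IsFilteredBy S α M}

/-- `Fil(S)`: the union of `Fil_α(S)` over all ordinals `α`. -/
def FilAll (S : Set (ModuleCat.{u} A)) : Set (ModuleCat.{u} A) :=
  {M | ∃ α : Ordinal.{u}, IsFilteredBy S α M}

/-- The product of `κ` copies of `U`. -/
def piPow (U : ModuleCat.{u} A) (κ : Type u) : ModuleCat.{u} A :=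
  ModuleCat.of A (κ → ↥U)

/-- The direct sum of `κ` copies of `U`. -/
def sumPow (U : ModuleCat.{u} A) (κ : Type u) : ModuleCat.{u} A :=
  ModuleCat.of A (κ →₀ ↥U)

/-- `Prod(U)`: direct summands of products of copies of `U`. -/
def ProdClass (U : ModuleCat.{u} A) : Set (ModuleCat.{u} A) :=
  {X | ∃ (κ : Type u) (i : X ⟶ piPow U κ) (r : piPow U κ ⟶ X), i ≫ r = 𝟙 X}

/-- `Add(U)`: direct summands of direct sums of copies of `U`. -/
def AddClass (U : ModuleCat.{u} A) : Set (ModuleCat.{u} A) :=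
  {X | ∃ (κ : Type u) (i : X ⟶ sumPow U κ) (r : sumPow U κ ⟶ X), i ≫ r = 𝟙 X}

/-- `J` is an injective cogenerator. -/
def IsInjectiveCogenerator (J : ModuleCat.{u} A) : Prop :=
  Injective J ∧ IsCoseparator J

/-- `P` is a projective generator. -/
def IsProjectiveGenerator (P : ModuleCat.{u} A) : Prop :=
  Projective P ∧ IsSeparator P

/-- `U` is an `n`-cotilting module: (C1) injective dimension at most `n`;
(C2) `Ext^i(U^κ, U) = 0` for all `i > 0` and all `κ`; (C3) there is an exact sequence
`0 → U_n → ⋯ → U_0 → J → 0` with `J` an injective cogenerator and `U_i ∈ Prod(U)`. -/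
def IsCotilting (n : ℕ) (U : ModuleCat.{u} A) : Prop :=
  CoresolutionDimLE {J : ModuleCat.{u} A | Injective J} U n ∧
  (∀ (κ : Type u) (i : ℕ), 0 < i → extVanish (piPow U κ) U i) ∧
  (∃ J : ModuleCat.{u} A, IsInjectiveCogenerator J ∧ ResolutionDimLE (ProdClass U) J n)

/-- The cotilting class `{}^{⊥_{>0}}U` induced by `U`. -/
def cotiltingClass (U : ModuleCat.{u} A) : Set (ModuleCat.{u} A) :=
  {M | ∀ i : ℕ, 0 < i → extVanish M U i}

/-- `D` admits an `m`-step cofiltration `D = G_m ↠ ⋯ ↠ G_1 ↠ G_0 = 0` with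
`ker (G_{i+1} → G_i)` isomorphic to a module from `T i`. -/
def FinCofilteredLevels (m : ℕ) (T : Fin m → Set (ModuleCat.{u} A)) :
    Set (ModuleCat.{u} A) :=
  {D | ∃ (G : Fin (m+1) → ModuleCat.{u} A) (p : ∀ i : Fin m, G i.succ ⟶ G i.castSucc),
    Limits.IsZero (G 0) ∧ G (Fin.last m) = D ∧ (∀ i, Epi (p i)) ∧
    (∀ i : Fin m, ∃ X ∈ T i, Nonempty ((LinearMap.ker (p i).hom) ≃ₗ[A] X))}

/-- `D` admits an `m`-step cofiltration with all successive kernels isomorphic to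
modules from the class `T`. -/
def FinCofiltered (m : ℕ) (T : Set (ModuleCat.{u} A)) : Set (ModuleCat.{u} A) :=
  FinCofilteredLevels m (fun _ => T)

/-- `G` admits an `m`-step filtration `0 = F_0 ⊆ F_1 ⊆ ⋯ ⊆ F_m = G` with
`F_{i+1}/F_i` isomorphic to a module from `T i`. -/
def FinFilteredLevels (m : ℕ) (T : Fin m → Set (ModuleCat.{u} A)) :
    Set (ModuleCat.{u} A) :=
  {G | ∃ Fl : Fin (m+1) → Submodule A G,
    Monotone Fl ∧ Fl 0 = ⊥ ∧ Fl (Fin.last m) = ⊤ ∧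
    (∀ i : Fin m, ∃ X ∈ T i, Nonempty
      ((↥(Fl i.succ) ⧸ (Submodule.comap (Fl i.succ).subtype (Fl i.castSucc))) ≃ₗ[A] X))}

end OneRing

section TwoRings

variable {R : Type u} {A : Type u} [Ring R] [Ring A]

/-- The underlying left `R`-module of `A`, via `f : R →+* A`. -/
def AasR (f : R →+* A) : ModuleCat.{u} R :=
  (ModuleCat.restrictScalars f).obj (ModuleCat.of A A)

/-- The class of left `A`-modules whose underlying `R`-module belongs to `F`. -/
def liftClass (f : R →+* A) (F : Set (ModuleCat.{u} R)) : Set (ModuleCat.{u} A) :=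
  {M | (ModuleCat.restrictScalars f).obj M ∈ F}

/-- The coinduced module `Hom_R(A, M)`. -/
def coind (f : R →+* A) (M : ModuleCat.{u} R) : ModuleCat.{u} A :=
  (ModuleCat.coextendScalars f).obj M

/-- The class of left `A`-modules of the form `Hom_R(A, C)`, `C ∈ 𝒞` (up to isomorphism). -/
def coindClass (f : R →+* A) (C : Set (ModuleCat.{u} R)) : Set (ModuleCat.{u} A) :=
  {N | ∃ X ∈ C, Nonempty (N ≅ coind f X)}

/-- `(T, η)` is the module induced from the `R`-module `L` along `f`, i.e. `T ≅ A ⊗_R L`: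
`η : L → T` is an `R`-linear map which is universal among `R`-linear maps from `L` to
(the restriction of) left `A`-modules. -/
def IsInducedFrom (f : R →+* A) (L : ModuleCat.{u} R) (T : ModuleCat.{u} A)
    (η : L ⟶ (ModuleCat.restrictScalars f).obj T) : Prop :=
  ∀ (X : ModuleCat.{u} A) (g : L ⟶ (ModuleCat.restrictScalars f).obj X),
    ∃! h : T ⟶ X, η ≫ (ModuleCat.restrictScalars f).map h = g

/-- The class of left `A`-modules of the form `A ⊗_R X`, `X ∈ F`. -/
def indClass (f : R →+* A) (F : Set (ModuleCat.{u} R)) : Set (ModuleCat.{u} A) :=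
  {T | ∃ X ∈ F, ∃ η, IsInducedFrom f X T η}

/-- `Tor^R_i(A, L) = 0` for all `0 < i ≤ n`: there is a projective resolution
`P_• → L` of the `R`-module `L` such that the induced complex of `A`-modules
`A ⊗_R P_•` is exact in homological degrees `1, …, n`. -/
def TorVanishesUpTo (f : R →+* A) (L : ModuleCat.{u} R) (n : ℕ) : Prop :=
  ∃ (P : ℕ → ModuleCat.{u} R) (d : ∀ m, P (m+1) ⟶ P m) (ε : P 0 ⟶ L)
    (hd : ∀ m, d (m+1) ≫ d m = 0) (hε : d 0 ≫ ε = 0),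
    (∀ m, Projective (P m)) ∧ Epi ε ∧ (ShortComplex.mk (d 0) ε hε).Exact ∧
    (∀ m, (ShortComplex.mk (d (m+1)) (d m) (hd m)).Exact) ∧
    ∃ (T : ℕ → ModuleCat.{u} A) (η : ∀ m, P m ⟶ (ModuleCat.restrictScalars f).obj (T m))
      (D : ∀ m, T (m+1) ⟶ T m) (hD : ∀ m, D (m+1) ≫ D m = 0),
      (∀ m, IsInducedFrom f (P m) (T m) (η m)) ∧
      (∀ m, η (m+1) ≫ (ModuleCat.restrictScalars f).map (D m) = d m ≫ η m) ∧
      (∀ j, j + 1 ≤ n → (ShortComplex.mk (D (j+1)) (D j) (hD j)).Exact)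

/-- The `R`-module structure on the character module `A⁺ = Hom_ℤ(A, ℚ/ℤ)`,
given by `(r • φ) a = φ (a * f r)`. -/
def aplusModule (f : R →+* A) : Module R (A →+ AddCircle (1 : ℚ)) where
  smul r φ := φ.comp (AddMonoidHom.mulRight (f r))
  one_smul φ := AddMonoidHom.ext fun a => by
    have h : f (1 : R) = 1 := map_one f
    show φ (a * f 1) = φ a
    rw [h, mul_one]
  mul_smul r s φ := AddMonoidHom.ext fun a => by
    have h : f (r * s) = f r * f s := map_mul f r s
    show φ (a * f (r * s)) = φ (a * f r * f s)
    rw [h, mul_assoc]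
  smul_zero r := AddMonoidHom.ext fun _ => rfl
  smul_add r φ ψ := AddMonoidHom.ext fun _ => rfl
  add_smul r s φ := AddMonoidHom.ext fun a => by
    have h : f (r + s) = f r + f s := map_add f r s
    show φ (a * f (r + s)) = φ (a * f r) + φ (a * f s)
    rw [h, mul_add, map_add]
  zero_smul φ := AddMonoidHom.ext fun a => by
    have h : f (0 : R) = 0 := map_zero f
    show φ (a * f 0) = 0
    rw [h, mul_zero, map_zero]

/-- The character module `A⁺ = Hom_ℤ(A, ℚ/ℤ)` as a left `R`-module. -/
def aplus (f : R →+* A) : ModuleCat.{u} R :=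
  @ModuleCat.of R _ (A →+ AddCircle (1 : ℚ)) _ (aplusModule f)

end TwoRings

end CotorsionPaper

open CotorsionPaper

/-- **Salce lemma.** Let `(F, C)` be an `Ext¹`-orthogonal pair of classes of
left `A`-modules, both closed under extensions.  Assume every left `A`-module is a quotient
of a module from `F` and a submodule of a module from `C`.  Then special precover sequences
exist for all modules iff special preenvelope sequences exist for all modules. -/
theorem salce_lemma {A : Type u} [Ring A] (F C : Set (ModuleCat.{u} A))
    (horth : Ext1Orthogonal F C)
    (hFext : ClosedUnderExtensions F)
    (hCext : ClosedUnderExtensions C)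
    (hquot : EveryModuleIsQuotient F)
    (hsub : EveryModuleIsSubmodule C) :
    (∀ M : ModuleCat.{u} A, HasSpecialPrecover F C M) ↔
      (∀ M : ModuleCat.{u} A, HasSpecialPreenvelope F C M) := by
  constructor
  · -- precovers give preenvelopes
    intro hpc M
    obtain ⟨C₀, hC₀, i, hi⟩ := hsub M
    let Q : ModuleCat.{u} A := ModuleCat.of A (↥C₀ ⧸ LinearMap.range i.hom)
    let q : C₀ ⟶ Q := ModuleCat.ofHom (LinearMap.range i.hom).mkQ
    obtain ⟨C', Fm, j, p, w, hse, hFm, hC'⟩ := hpc Q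
    have hiinj : Function.Injective i := (ModuleCat.mono_iff_injective i).mp hi
    have hjinj : Function.Injective j := hse.moduleCat_injective_f
    have hpsurj : Function.Surjective p := hse.moduleCat_surjective_g
    have hexact : ∀ x₂ : ↥Fm, p x₂ = 0 → ∃ x₁ : ↥C', j x₁ = x₂ :=
      (ShortComplex.moduleCat_exact_iff _).mp hse.exact
    have hpj : ∀ c' : ↥C', p (j c') = 0 := fun c' => by
      have := DFunLike.congr_fun (congrArg ModuleCat.Hom.hom w) c'
      simpa using this
    let δ : (↥C₀ × ↥Fm) →ₗ[A] ↥Q :=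
      q.hom.comp (LinearMap.fst A ↥C₀ ↥Fm) -
        p.hom.comp (LinearMap.snd A ↥C₀ ↥Fm)
    have memδ : ∀ (c : ↥C₀) (f : ↥Fm), (c, f) ∈ LinearMap.ker δ ↔ q c = p f := by
      intro c f
      simp [δ, LinearMap.mem_ker, sub_eq_zero]
    let X : ModuleCat.{u} A := ModuleCat.of A ↥(LinearMap.ker δ)
    have hmι : ∀ m : ↥M,
        ((LinearMap.inl A ↥C₀ ↥Fm).comp i.hom) m ∈ LinearMap.ker δ := by
      intro m
      refine (memδ _ _).mpr ?_
      show q (i m) = p 0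
      rw [map_zero]
      exact (Submodule.Quotient.mk_eq_zero _).mpr ⟨m, rfl⟩
    let ι : M ⟶ X :=
      ModuleCat.ofHom (LinearMap.codRestrict (LinearMap.ker δ) ((LinearMap.inl A ↥C₀ ↥Fm).comp i.hom) hmι)
    let π : X ⟶ Fm := ModuleCat.ofHom ((LinearMap.snd A ↥C₀ ↥Fm).comp (LinearMap.ker δ).subtype)
    have wι : ι ≫ π = 0 := by
      ext m
      rfl
    have hse1 : (ShortComplex.mk ι π wι).ShortExact := by
      refine ShortComplex.ShortExact.mk' ?_ ?_ ?_
      · rw [ShortComplex.moduleCat_exact_iff]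
        rintro ⟨⟨c, f⟩, hcf⟩ hx
        have hf : f = 0 := hx
        subst hf
        have hc : q c = 0 := by
          have := (memδ c 0).mp hcf
          rwa [map_zero] at this
        obtain ⟨m, hm⟩ := (Submodule.Quotient.mk_eq_zero _).mp hc
        refine ⟨m, Subtype.ext ?_⟩
        show ((i m : ↥C₀), (0 : ↥Fm)) = (c, 0)
        rw [hm]
      · rw [ModuleCat.mono_iff_injective]
        intro a b hab
        apply hiinj
        have := congrArg (fun x : ↥(LinearMap.ker δ) => (x : ↥C₀ × ↥Fm).1) hab
        exact this
      · rw [ModuleCat.epi_iff_surjective]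
        intro f
        obtain ⟨c, hc⟩ := Submodule.mkQ_surjective _ (p f)
        exact ⟨⟨(c, f), (memδ c f).mpr hc⟩, rfl⟩
    have hmκ : ∀ c' : ↥C',
        ((LinearMap.inr A ↥C₀ ↥Fm).comp j.hom) c' ∈ LinearMap.ker δ := by
      intro c'
      refine (memδ _ _).mpr ?_
      show q 0 = p (j c')
      rw [map_zero, hpj]
    let κ : C' ⟶ X :=
      ModuleCat.ofHom (LinearMap.codRestrict (LinearMap.ker δ) ((LinearMap.inr A ↥C₀ ↥Fm).comp j.hom) hmκ)
    let ρ : X ⟶ C₀ := ModuleCat.ofHom ((LinearMap.fst A ↥C₀ ↥Fm).comp (LinearMap.ker δ).subtype)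
    have wκ : κ ≫ ρ = 0 := by
      ext c'
      rfl
    have hse2 : (ShortComplex.mk κ ρ wκ).ShortExact := by
      refine ShortComplex.ShortExact.mk' ?_ ?_ ?_
      · rw [ShortComplex.moduleCat_exact_iff]
        rintro ⟨⟨c, f⟩, hcf⟩ hx
        have hc : c = 0 := hx
        subst hc
        have hpf : p f = 0 := by
          have := (memδ 0 f).mp hcf
          rw [map_zero] at this
          exact this.symm
        obtain ⟨c', hc'⟩ := hexact f hpf
        refine ⟨c', Subtype.ext ?_⟩
        show ((0 : ↥C₀), (j c' : ↥Fm)) = (0, f)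
        rw [hc']
      · rw [ModuleCat.mono_iff_injective]
        intro a b hab
        apply hjinj
        have := congrArg (fun x : ↥(LinearMap.ker δ) => (x : ↥C₀ × ↥Fm).2) hab
        exact this
      · rw [ModuleCat.epi_iff_surjective]
        intro c
        obtain ⟨f, hf⟩ := hpsurj (q c)
        exact ⟨⟨(c, f), (memδ c f).mpr hf.symm⟩, rfl⟩
    exact ⟨X, Fm, ι, π, wι, hse1, hCext _ hse2 hC' hC₀, hFm⟩
  · -- preenvelopes give precovers
    intro hpe M
    obtain ⟨F₀, hF₀, π₀, hπ₀⟩ := hquot M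
    have hπ₀surj : Function.Surjective π₀ := (ModuleCat.epi_iff_surjective π₀).mp hπ₀
    let Kd : Submodule A ↥F₀ := LinearMap.ker π₀.hom
    let K : ModuleCat.{u} A := ModuleCat.of A ↥Kd
    obtain ⟨Cm, F', e, p', w', hse, hCm, hF'⟩ := hpe K
    have heinj : Function.Injective e := hse.moduleCat_injective_f
    have hp'surj : Function.Surjective p' := hse.moduleCat_surjective_g
    have hexact : ∀ x₂ : ↥Cm, p' x₂ = 0 → ∃ x₁ : ↥K, e x₁ = x₂ :=
      (ShortComplex.moduleCat_exact_iff _).mp hse.exact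
    have hpe'0 : ∀ x : ↥K, p' (e x) = 0 := fun x => by
      have := DFunLike.congr_fun (congrArg ModuleCat.Hom.hom w') x
      simpa using this
    let k : ↥K →ₗ[A] ↥F₀ := Kd.subtype
    have hkinj : Function.Injective k := Submodule.injective_subtype Kd
    have hπ₀k : ∀ x : ↥K, π₀ (k x) = 0 := fun x =>
      LinearMap.mem_ker.mp (Submodule.coe_mem (show ↥Kd from x))
    let θ : ↥K →ₗ[A] (↥Cm × ↥F₀) :=
      (LinearMap.inl A ↥Cm ↥F₀).comp e.hom -
        (LinearMap.inr A ↥Cm ↥F₀).comp k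
    have hθ : ∀ x : ↥K, θ x = (e x, -(k x)) := by
      intro x
      show ((e x, 0) : ↥Cm × ↥F₀) - (0, k x) = (e x, -(k x))
      rw [Prod.mk_sub_mk, sub_zero, zero_sub]
    let Y : ModuleCat.{u} A := ModuleCat.of A ((↥Cm × ↥F₀) ⧸ LinearMap.range θ)
    let μ : (↥Cm × ↥F₀) →ₗ[A] ↥Y := (LinearMap.range θ).mkQ
    have hμθ : ∀ x : ↥K, μ (θ x) = 0 := fun x =>
      (Submodule.Quotient.mk_eq_zero _).mpr ⟨x, rfl⟩
    let u : Cm ⟶ Y := ModuleCat.ofHom (μ.comp (LinearMap.inl A ↥Cm ↥F₀))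
    have hv0 : LinearMap.range θ ≤
        LinearMap.ker (π₀.hom.comp (LinearMap.snd A ↥Cm ↥F₀)) := by
      rintro _ ⟨x, rfl⟩
      rw [LinearMap.mem_ker, hθ x]
      show π₀ (-(k x)) = 0
      rw [map_neg, hπ₀k x, neg_zero]
    let v : Y ⟶ M := ModuleCat.ofHom (Submodule.liftQ (LinearMap.range θ)
      (π₀.hom.comp (LinearMap.snd A ↥Cm ↥F₀)) hv0)
    have hvapp : ∀ z : ↥Cm × ↥F₀, v (μ z) = π₀ z.2 := fun z =>
      Submodule.liftQ_apply _ _ z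
    have wu : u ≫ v = 0 := by
      ext c
      show v (μ (c, 0)) = 0
      rw [hvapp]
      exact map_zero _
    have hse1 : (ShortComplex.mk u v wu).ShortExact := by
      refine ShortComplex.ShortExact.mk' ?_ ?_ ?_
      · rw [ShortComplex.moduleCat_exact_iff]
        intro y hy
        obtain ⟨z, rfl⟩ := Submodule.mkQ_surjective _ y
        have hz2 : z.2 ∈ Kd := by
          rw [LinearMap.mem_ker]
          exact (hvapp z) ▸ hy
        set x : ↥K := (⟨z.2, hz2⟩ : ↥Kd) with hxdef
        have hkx : k x = z.2 := rfl
        refine ⟨z.1 + e x, ?_⟩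
        show μ (z.1 + e x, 0) = μ z
        have hdiff : ((z.1 + e x, (0 : ↥F₀)) : ↥Cm × ↥F₀) - z = θ x := by
          rw [hθ x]
          have h1 : z.1 + e x - z.1 = e x := add_sub_cancel_left _ _
          have h2 : (0 : ↥F₀) - z.2 = -(k x) := by
            rw [zero_sub, hkx]
          calc ((z.1 + e x, (0 : ↥F₀)) : ↥Cm × ↥F₀) - z
              = (z.1 + e x - z.1, 0 - z.2) := rfl
            _ = (e x, -(k x)) := by rw [h1, h2]
        have h0 : μ ((z.1 + e x, (0 : ↥F₀)) - z) = 0 := by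
          rw [hdiff]
          exact hμθ x
        rw [map_sub] at h0
        exact sub_eq_zero.mp h0
      · rw [ModuleCat.mono_iff_injective]
        intro a b hab
        have h0 : μ (((a, 0) : ↥Cm × ↥F₀) - (b, 0)) = 0 := by
          rw [map_sub]
          exact sub_eq_zero.mpr hab
        have hmem : (((a, 0) : ↥Cm × ↥F₀) - (b, 0)) ∈ LinearMap.range θ :=
          (Submodule.Quotient.mk_eq_zero _).mp h0
        obtain ⟨x, hx⟩ := hmem
        rw [hθ x] at hx
        have hsub : (((a, 0) : ↥Cm × ↥F₀) - (b, 0)) = (a - b, 0) := by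
          rw [Prod.mk_sub_mk, sub_zero]
        rw [hsub, Prod.ext_iff] at hx
        have hx2 : k x = 0 := by
          have := hx.2
          rwa [neg_eq_zero] at this
        have hx0 : x = 0 := hkinj (by rw [hx2, map_zero])
        have := hx.1
        rw [hx0, map_zero] at this
        exact sub_eq_zero.mp this.symm
      · rw [ModuleCat.epi_iff_surjective]
        intro m
        obtain ⟨f, hf⟩ := hπ₀surj m
        exact ⟨μ (0, f), by rw [hvapp]; exact hf⟩
    let s : F₀ ⟶ Y := ModuleCat.ofHom (μ.comp (LinearMap.inr A ↥Cm ↥F₀))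
    have ht0 : LinearMap.range θ ≤
        LinearMap.ker (p'.hom.comp (LinearMap.fst A ↥Cm ↥F₀)) := by
      rintro _ ⟨x, rfl⟩
      rw [LinearMap.mem_ker, hθ x]
      exact hpe'0 x
    let t : Y ⟶ F' := ModuleCat.ofHom (Submodule.liftQ (LinearMap.range θ)
      (p'.hom.comp (LinearMap.fst A ↥Cm ↥F₀)) ht0)
    have htapp : ∀ z : ↥Cm × ↥F₀, t (μ z) = p' z.1 := fun z =>
      Submodule.liftQ_apply _ _ z
    have ws : s ≫ t = 0 := by
      ext f
      show t (μ (0, f)) = 0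
      rw [htapp]
      exact map_zero _
    have hseY : (ShortComplex.mk s t ws).ShortExact := by
      refine ShortComplex.ShortExact.mk' ?_ ?_ ?_
      · rw [ShortComplex.moduleCat_exact_iff]
        intro y hy
        obtain ⟨z, rfl⟩ := Submodule.mkQ_surjective _ y
        have hz1 : p' z.1 = 0 := (htapp z) ▸ hy
        obtain ⟨x, hx⟩ := hexact z.1 hz1
        refine ⟨z.2 + k x, ?_⟩
        show μ (0, z.2 + k x) = μ z
        have hdiff : (((0 : ↥Cm), z.2 + k x) : ↥Cm × ↥F₀) - z = -(θ x) := by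
          rw [hθ x]
          calc (((0 : ↥Cm), z.2 + k x) : ↥Cm × ↥F₀) - z
              = (0 - z.1, z.2 + k x - z.2) := rfl
            _ = (-(e x), k x) := by
                rw [zero_sub, hx]
                congr 1
                exact add_sub_cancel_left _ _
            _ = -((e x, -(k x)) : ↥Cm × ↥F₀) := by
                rw [Prod.neg_mk, neg_neg]
        have h0 : μ ((((0 : ↥Cm), z.2 + k x) : ↥Cm × ↥F₀) - z) = 0 := by
          rw [hdiff, map_neg, hμθ x, neg_zero]
        rw [map_sub] at h0
        exact sub_eq_zero.mp h0
      · rw [ModuleCat.mono_iff_injective]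
        intro a b hab
        have h0 : μ ((((0 : ↥Cm), a) : ↥Cm × ↥F₀) - (0, b)) = 0 := by
          rw [map_sub]
          exact sub_eq_zero.mpr hab
        have hmem := (Submodule.Quotient.mk_eq_zero _).mp h0
        obtain ⟨x, hx⟩ := hmem
        rw [hθ x] at hx
        have hsub : ((((0 : ↥Cm), a) : ↥Cm × ↥F₀) - (0, b)) = (0, a - b) := by
          rw [Prod.mk_sub_mk, sub_zero]
        rw [hsub, Prod.mk.injEq] at hx
        have hx0 : x = 0 := heinj (by rw [hx.1, map_zero])
        have h2 := hx.2
        rw [hx0, map_zero, neg_zero] at h2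
        exact sub_eq_zero.mp h2.symm
      · rw [ModuleCat.epi_iff_surjective]
        intro f'
        obtain ⟨c, hc⟩ := hp'surj f'
        exact ⟨μ (c, 0), by rw [htapp]; exact hc⟩
    exact ⟨Cm, Y, u, v, wu, hse1, hFext _ hseY hF₀ hF', hCm⟩

end
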